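/- Let 1̃{a < b} = (1/2)(1 + erf((b-a)/(√2 r))) be the Gaussian-smoothed indicator with smoothing parameter r > 0, where erf(x) = (2/√π)∫₀ˣ e^{-t²} dt. Then for any fixed b ∈ ℝ, ∫_{-∞}^{∞} |1̃{a < b} - 1{a < b}| da = r·√(2/π). -/

import Mathlib

open MeasureTheory Real Set Filter Topology

/-- The Gaussian error function `erf(x) = (2/√π) ∫₀ˣ e^{-t²} dt`. -/
noncomputable def erf (x : ℝ) : ℝ :=
  (2 / Real.sqrt Real.pi) * ∫ t in (0:ℝ)..x, Real.exp (-t ^ 2)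

noncomputable def gtail (x : ℝ) : ℝ := ∫ t in Set.Ioi x, Real.exp (-t ^ 2)

lemma hint : Integrable (fun t : ℝ => Real.exp (-t ^ 2)) := by
  simpa using integrable_exp_neg_mul_sq (b := 1) one_pos

lemma hK (y : ℝ) : gtail y = (∫ t in Set.Ioi (0:ℝ), Real.exp (-t ^ 2))
    - ∫ t in (0:ℝ)..y, Real.exp (-t ^ 2) := by
  have h1 := intervalIntegral.integral_Iic_add_Ioi (b := (0:ℝ)) (f := fun t => Real.exp (-t ^ 2))
    hint.integrableOn hint.integrableOn
  have h2 := intervalIntegral.integral_Iic_add_Ioi (b := y) (f := fun t => Real.exp (-t ^ 2))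
    hint.integrableOn hint.integrableOn
  have h3 := intervalIntegral.integral_Iic_sub_Iic (f := fun t => Real.exp (-t ^ 2))
    (a := (0:ℝ)) (b := y) hint.integrableOn hint.integrableOn
  simp only [gtail]
  linarith

lemma I0 : (∫ t in Set.Ioi (0:ℝ), Real.exp (-t ^ 2)) = Real.sqrt Real.pi / 2 := by
  have := integral_gaussian_Ioi 1
  simpa using this

lemma gtail_nonneg (x : ℝ) : 0 ≤ gtail x :=
  setIntegral_nonneg measurableSet_Ioi (fun t _ => (Real.exp_pos _).le)

lemma gtail_le (x : ℝ) : gtail x ≤ Real.exp (1/4) * Real.exp (-x) := by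
  have h : ∀ t : ℝ, Real.exp (-t ^ 2) ≤ Real.exp (1/4) * Real.exp (-t) := by
    intro t
    rw [← Real.exp_add]
    apply Real.exp_le_exp.2
    nlinarith [sq_nonneg (t - 1/2)]
  calc gtail x ≤ ∫ t in Set.Ioi x, Real.exp (1/4) * Real.exp (-t) := by
        apply setIntegral_mono_on hint.integrableOn
          (by simpa [IntegrableOn] using (exp_neg_integrableOn_Ioi x one_pos).const_mul (Real.exp (1/4)))
          measurableSet_Ioi
        exact fun t _ => h t
    _ = Real.exp (1/4) * Real.exp (-x) := by
        rw [integral_const_mul, integral_exp_neg_Ioi]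

lemma gtail_hasDeriv (x : ℝ) : HasDerivAt gtail (-(Real.exp (-x ^ 2))) x := by
  have hG : HasDerivAt (fun y => ∫ t in (0:ℝ)..y, Real.exp (-t ^ 2))
      (Real.exp (-x ^ 2)) x := by
    exact intervalIntegral.integral_hasDerivAt_right hint.intervalIntegrable
      ((by fun_prop : Continuous fun t : ℝ => Real.exp (-t ^ 2)).stronglyMeasurableAtFilter _ _)
      (by fun_prop)
  have heq : gtail = fun y => (∫ t in Set.Ioi (0:ℝ), Real.exp (-t ^ 2))
      - ∫ t in (0:ℝ)..y, Real.exp (-t ^ 2) := funext hK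
  rw [heq]
  exact hG.const_sub _

lemma integral_gtail : ∫ x in Set.Ioi (0:ℝ), gtail x = 1/2 := by
  have hcont : Continuous gtail :=
    continuous_iff_continuousAt.2 fun x => (gtail_hasDeriv x).continuousAt
  have hderiv : ∀ x ∈ Set.Ici (0:ℝ),
      HasDerivAt (fun x => x * gtail x - Real.exp (-x ^ 2) / 2) (gtail x) x := by
    intro x _
    have h1 : HasDerivAt (fun x : ℝ => x * gtail x)
        (1 * gtail x + x * -(Real.exp (-x ^ 2))) x :=
      (hasDerivAt_id x).mul (gtail_hasDeriv x)
    have h2 : HasDerivAt (fun x : ℝ => Real.exp (-x ^ 2) / 2)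
        ((Real.exp (-x ^ 2) * -(↑2 * x ^ 1)) / 2) x :=
      (((hasDerivAt_pow 2 x).neg).exp).div_const 2
    refine HasDerivAt.congr_deriv (h1.sub h2) ?_
    push_cast
    ring
  have hdom : Integrable (fun x : ℝ => Real.exp (1/4) * Real.exp (-x))
      (volume.restrict (Set.Ioi (0:ℝ))) := by
    simpa using (exp_neg_integrableOn_Ioi 0 one_pos).const_mul (Real.exp (1/4))
  have hfint : IntegrableOn gtail (Set.Ioi 0) := by
    apply hdom.mono (hcont.aestronglyMeasurable.restrict)
    filter_upwards with x
    rw [Real.norm_eq_abs, Real.norm_eq_abs, abs_of_nonneg (gtail_nonneg x),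
      abs_of_nonneg (by positivity)]
    exact gtail_le x
  have ht1 : Tendsto (fun x : ℝ => x * gtail x) atTop (𝓝 0) := by
    have hub : Tendsto (fun x : ℝ => Real.exp (1/4) * (x ^ 1 * Real.exp (-x))) atTop (𝓝 0) := by
      simpa using (tendsto_pow_mul_exp_neg_atTop_nhds_zero 1).const_mul (Real.exp (1/4))
    apply tendsto_of_tendsto_of_tendsto_of_le_of_le' tendsto_const_nhds hub
    · filter_upwards [eventually_ge_atTop (0:ℝ)] with x hx
      exact mul_nonneg hx (gtail_nonneg x)
    · filter_upwards [eventually_ge_atTop (0:ℝ)] with x hx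
      have := gtail_le x
      calc x * gtail x ≤ x * (Real.exp (1/4) * Real.exp (-x)) :=
            mul_le_mul_of_nonneg_left this hx
        _ = Real.exp (1/4) * (x ^ 1 * Real.exp (-x)) := by ring
  have ht2 : Tendsto (fun x : ℝ => Real.exp (-x ^ 2) / 2) atTop (𝓝 0) := by
    have : Tendsto (fun x : ℝ => Real.exp (-x ^ 2)) atTop (𝓝 0) := by
      apply Real.tendsto_exp_atBot.comp
      apply Filter.Tendsto.comp tendsto_neg_atTop_atBot
      exact tendsto_pow_atTop two_ne_zero
    simpa using this.div_const 2
  have := integral_Ioi_of_hasDerivAt_of_tendsto' hderiv hfint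
    (by simpa using ht1.sub ht2)
  rw [this]
  norm_num

/-- The total (Lebesgue) integral of the absolute error between the
Gaussian-smoothed indicator `1̃{a < b} = (1/2)(1 + erf((b-a)/(√2 r)))` and the indicator
`1{a < b}` equals `r·√(2/π)`. -/
theorem stmt8 (r : ℝ) (hr : 0 < r) (b : ℝ) :
    ∫ a : ℝ,
        |(1 / 2) * (1 + erf ((b - a) / (Real.sqrt 2 * r)))
          - (if a < b then (1:ℝ) else 0)|
      = r * Real.sqrt (2 / Real.pi) := by
  have hπ : 0 < Real.sqrt Real.pi := Real.sqrt_pos.2 Real.pi_pos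
  set c := Real.sqrt 2 * r with hc
  have hc0 : 0 < c := mul_pos (Real.sqrt_pos.2 two_pos) hr
  have E1 : ∀ y : ℝ, (1/2) * (1 - erf y) = (1 / Real.sqrt Real.pi) * gtail y := by
    intro y
    rw [erf, hK y, I0]
    have hself : Real.sqrt Real.pi / Real.sqrt Real.pi = 1 := div_self hπ.ne'
    linear_combination (-(1/2) : ℝ) * hself
  have erf_neg : ∀ y : ℝ, erf (-y) = - erf y := by
    intro y
    have h := intervalIntegral.integral_comp_neg (a := (0:ℝ)) (b := y)
      (f := fun t => Real.exp (-t ^ 2))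
    simp only [neg_sq, neg_zero] at h
    have h2 : (∫ t in (0:ℝ)..(-y), Real.exp (-t ^ 2))
        = - ∫ t in (0:ℝ)..y, Real.exp (-t ^ 2) := by
      rw [intervalIntegral.integral_symm, ← h]
    rw [erf, erf, h2]
    ring
  have key : ∀ y : ℝ, |(1/2) * (1 + erf y) - (if 0 < y then (1:ℝ) else 0)|
      = (1 / Real.sqrt Real.pi) * gtail |y| := by
    intro y
    have hg0 : ∀ z : ℝ, 0 ≤ (1 / Real.sqrt Real.pi) * gtail z :=
      fun z => mul_nonneg (by positivity) (gtail_nonneg z)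
    by_cases hy : 0 < y
    · rw [if_pos hy, abs_of_pos hy]
      have h := E1 y
      have h0 := hg0 y
      rw [abs_of_nonpos (by linarith)]
      linarith
    · rw [if_neg hy, abs_of_nonpos (not_lt.1 hy), sub_zero]
      have h := E1 (-y)
      rw [erf_neg] at h
      have h0 := hg0 (-y)
      rw [abs_of_nonneg (by linarith)]
      linarith
  have hiff : ∀ a : ℝ, (a < b) = (0 < (b - a) / c) := by
    intro a
    rw [eq_iff_iff, lt_div_iff₀ hc0, zero_mul, sub_pos]
  have step1 : (∫ a : ℝ, |(1 / 2) * (1 + erf ((b - a) / c)) - (if a < b then (1:ℝ) else 0)|)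
      = ∫ a : ℝ, (fun u : ℝ => (1 / Real.sqrt Real.pi) * gtail |u / c|) (b - a) := by
    congr 1
    funext a
    simp only [hiff a]
    exact key _
  rw [step1, integral_sub_left_eq_self (fun u : ℝ => (1 / Real.sqrt Real.pi) * gtail |u / c|)
    volume b]
  rw [MeasureTheory.Measure.integral_comp_div
    (fun y : ℝ => (1 / Real.sqrt Real.pi) * gtail |y|) c]
  rw [integral_const_mul, integral_comp_abs (f := gtail), integral_gtail]
  rw [smul_eq_mul, abs_of_pos hc0, Real.sqrt_div (by norm_num : (0:ℝ) ≤ 2)]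
  rw [hc]
  field_simp
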